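/- Let Γ be a PTFA group and ψ: Γ → Z an epimorphism with kernel Γ^ψ. A choice of splitting ξ: Z → Γ induces a ring isomorphism between the localization ZΓ(ZΓ^ψ − {0})^{−1} and the skew Laurent polynomial ring K_{Γ^ψ}[t^{±1}], where K_{Γ^ψ} is the right field of fractions of ZΓ^ψ and at = t(ξ(1)^{−1} a ξ(1)) for a ∈ K_{Γ^ψ}. -/

import Mathlib

/-- A group `G` is poly-torsion-free-abelian (PTFA) if it has a normal series of finite
length whose successive quotients are torsion-free abelian. -/
def IsPTFA (G : Type*) [Group G] : Prop :=
  ∃ (n : ℕ) (s : Fin (n + 1) → Subgroup G),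
    s 0 = ⊥ ∧ s (Fin.last n) = ⊤ ∧
    (∀ i : Fin n, s i.castSucc ≤ s i.succ) ∧
    (∀ i : Fin n, ∀ x ∈ s i.succ, ∀ y ∈ s i.castSucc, x * y * x⁻¹ ∈ s i.castSucc) ∧
    (∀ i : Fin n, ∀ x ∈ s i.succ, ∀ y ∈ s i.succ, x * y * x⁻¹ * y⁻¹ ∈ s i.castSucc) ∧
    (∀ i : Fin n, ∀ x ∈ s i.succ, ∀ m : ℕ, 0 < m → x ^ m ∈ s i.castSucc → x ∈ s i.castSucc)


section
variable {Γ : Type*} [Group Γ] (ψ : Γ →* Multiplicative ℤ) (ξ : Multiplicative ℤ →* Γ)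

def cconjX (m : Multiplicative ℤ) (h : ψ.ker) : ψ.ker :=
  ⟨(ξ m)⁻¹ * ↑h * ξ m, by
    have hh : ψ (↑h : Γ) = 1 := h.2
    simp [MonoidHom.mem_ker, map_mul, hh]⟩

@[simp] lemma cconjX_coe (m : Multiplicative ℤ) (h : ψ.ker) :
    (cconjX ψ ξ m h : Γ) = (ξ m)⁻¹ * ↑h * ξ m := rfl

lemma cconjX_add (m m' : Multiplicative ℤ) (h : ψ.ker) :
    cconjX ψ ξ m' (cconjX ψ ξ m h) = cconjX ψ ξ (m * m') h := by
  apply Subtype.ext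
  simp only [cconjX_coe, map_mul]
  group

lemma cconjX_one (h : ψ.ker) : cconjX ψ ξ 1 h = h := by
  apply Subtype.ext
  simp [cconjX_coe]

variable {K : Type*} [DivisionRing K] (e : MonoidAlgebra ℤ ψ.ker →+* K) (σK : K ≃+* K)
variable (hσK : ∀ h h' : ψ.ker,
    (h' : Γ) = (ξ (Multiplicative.ofAdd 1))⁻¹ * h * ξ (Multiplicative.ofAdd 1) →
      σK (e (MonoidAlgebra.of ℤ ψ.ker h)) = e (MonoidAlgebra.of ℤ ψ.ker h'))

include hσK in
lemma sconjX (h : ψ.ker) :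
    σK (e (MonoidAlgebra.of ℤ ψ.ker h)) =
      e (MonoidAlgebra.of ℤ ψ.ker (cconjX ψ ξ (Multiplicative.ofAdd 1) h)) :=
  hσK h _ rfl

include hσK in
lemma sconjX_symm (h : ψ.ker) :
    σK.symm (e (MonoidAlgebra.of ℤ ψ.ker h)) =
      e (MonoidAlgebra.of ℤ ψ.ker (cconjX ψ ξ (Multiplicative.ofAdd (-1)) h)) := by
  apply σK.injective
  rw [RingEquiv.apply_symm_apply, sconjX ψ ξ e σK hσK, cconjX_add]
  have : (Multiplicative.ofAdd (-1 : ℤ)) * Multiplicative.ofAdd (1 : ℤ) = 1 := by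
    rw [← ofAdd_add]; norm_num
  rw [this, cconjX_one]

include hσK in
lemma sigma_zpow_conjX (n : ℤ) (h : ψ.ker) :
    (σK ^ n) (e (MonoidAlgebra.of ℤ ψ.ker h)) =
      e (MonoidAlgebra.of ℤ ψ.ker (cconjX ψ ξ (Multiplicative.ofAdd n) h)) := by
  induction n using Int.induction_on with
  | zero =>
    simp only [zpow_zero]
    have h1 : cconjX ψ ξ (Multiplicative.ofAdd (0:ℤ)) h = h := cconjX_one ψ ξ h
    have : ((1 : K ≃+* K)) (e (MonoidAlgebra.of ℤ ψ.ker h)) = e (MonoidAlgebra.of ℤ ψ.ker h) := rfl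
    rw [this, h1]
  | succ n ih =>
    have hz : (σK ^ ((n : ℤ) + 1)) = σK * σK ^ (n : ℤ) := by
      rw [← zpow_one_add]; ring_nf
    have happ : ∀ x, (σK * σK ^ (n : ℤ)) x = σK ((σK ^ (n : ℤ)) x) := fun _ => rfl
    rw [hz, happ, ih, sconjX ψ ξ e σK hσK, cconjX_add]
    have : Multiplicative.ofAdd (n : ℤ) * Multiplicative.ofAdd (1 : ℤ)
        = Multiplicative.ofAdd ((n : ℤ) + 1) := by rw [← ofAdd_add]
    rw [this]
  | pred n ih =>
    have hz : (σK ^ (-(n : ℤ) - 1)) = σK⁻¹ * σK ^ (-(n : ℤ)) := by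
      rw [← zpow_neg_one, ← zpow_add]; ring_nf
    have happ : ∀ x, (σK⁻¹ * σK ^ (-(n : ℤ))) x = σK.symm ((σK ^ (-(n : ℤ))) x) := fun _ => rfl
    rw [hz, happ, ih, sconjX_symm ψ ξ e σK hσK, cconjX_add]
    have : Multiplicative.ofAdd (-(n : ℤ)) * Multiplicative.ofAdd (-1 : ℤ)
        = Multiplicative.ofAdd (-(n : ℤ) - 1) := by rw [← ofAdd_add]; ring_nf
    rw [this]

end

section
variable {K : Type*} [DivisionRing K] (σK : K ≃+* K)
variable {L' : Type*} [Ring L'] (ι : K →+* L') (t : L'ˣ)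
variable (hcomm : ∀ a : K, ι a * t = t * ι (σK a))

include hcomm in
lemma commt_inv (a : K) : ι a * ↑t⁻¹ = ↑t⁻¹ * ι (σK.symm a) := by
  have h : ι (σK.symm a) * ↑t = ↑t * ι a := by
    rw [hcomm, RingEquiv.apply_symm_apply]
  have h2 : (ι a * ↑t⁻¹) * ↑t = (↑t⁻¹ * ι (σK.symm a)) * ↑t := by
    rw [mul_assoc, mul_assoc, h, Units.inv_mul, ← mul_assoc, Units.inv_mul, one_mul, mul_one]
  exact (Units.mul_left_inj t).mp h2

include hcomm in
lemma commtX (n : ℤ) (a : K) :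
    ι a * ↑(t ^ n) = ↑(t ^ n) * ι ((σK ^ n) a) := by
  induction n using Int.induction_on with
  | zero => simp
  | succ n ih =>
    have h1 : (t ^ ((n : ℤ) + 1)) = t ^ (n : ℤ) * t := zpow_add_one t n
    have h2 : (σK ^ ((n : ℤ) + 1)) a = σK ((σK ^ (n : ℤ)) a) := by
      rw [show ((n:ℤ)+1) = 1 + n by ring, zpow_add, zpow_one]
      rfl
    rw [h1, h2, Units.val_mul, ← mul_assoc, ih, mul_assoc, hcomm, ← mul_assoc]
  | pred n ih =>
    have h1 : (t ^ (-(n : ℤ) - 1)) = t ^ (-(n : ℤ)) * t⁻¹ := by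
      rw [zpow_sub_one]
    have h2 : (σK ^ (-(n : ℤ) - 1)) a = σK.symm ((σK ^ (-(n : ℤ))) a) := by
      rw [show (-(n:ℤ)-1) = -1 + -(n:ℤ) by ring, zpow_add, zpow_neg_one]
      rfl
    rw [h1, h2, Units.val_mul, ← mul_assoc, ih, mul_assoc,
      commt_inv σK ι t hcomm, ← mul_assoc]

end

section
variable {Γ : Type*} [Group Γ] (ψ : Γ →* Multiplicative ℤ) (ξ : Multiplicative ℤ →* Γ)

/-- the kernel part of `γ`. -/
def kpart (hξ : ∀ m, ψ (ξ m) = m) (γ : Γ) : ψ.ker :=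
  ⟨(ξ (ψ γ))⁻¹ * γ, by simp [MonoidHom.mem_ker, map_mul, hξ]⟩

@[simp] lemma kpart_coe (hξ : ∀ m, ψ (ξ m) = m) (γ : Γ) :
    (kpart ψ ξ hξ γ : Γ) = (ξ (ψ γ))⁻¹ * γ := rfl

variable {K : Type*} [DivisionRing K] (e : MonoidAlgebra ℤ ψ.ker →+* K) (σK : K ≃+* K)
variable {L' : Type*} [Ring L'] (ι : K →+* L') (t : L'ˣ)

include ψ ξ e σK ι t in
/-- The multiplicative map `Γ →* L'`. -/
lemma Ghom_exists
    (hξ : ∀ m, ψ (ξ m) = m)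
    (hσK : ∀ h h' : ψ.ker,
      (h' : Γ) = (ξ (Multiplicative.ofAdd 1))⁻¹ * h * ξ (Multiplicative.ofAdd 1) →
        σK (e (MonoidAlgebra.of ℤ ψ.ker h)) = e (MonoidAlgebra.of ℤ ψ.ker h'))
    (hcomm : ∀ a : K, ι a * t = t * ι (σK a)) :
    ∃ G : Γ →* L',
    ∀ γ : Γ, G γ = ↑(t ^ (ψ γ).toAdd) * ι (e (MonoidAlgebra.of ℤ ψ.ker (kpart ψ ξ hξ γ))) := by
  refine ⟨{ toFun := fun γ => ↑(t ^ (ψ γ).toAdd) * ι (e (MonoidAlgebra.of ℤ ψ.ker (kpart ψ ξ hξ γ)))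
            map_one' := ?_
            map_mul' := ?_ }, fun γ => rfl⟩
  · have h1 : kpart ψ ξ hξ (1 : Γ) = 1 := by
      apply Subtype.ext; simp
    rw [h1]
    simp [← MonoidAlgebra.one_def]
  · intro γ₁ γ₂
    have hψ12 : ψ (γ₁ * γ₂) = ψ γ₁ * ψ γ₂ := map_mul ψ γ₁ γ₂
    have hcm : ι (e (MonoidAlgebra.of ℤ ψ.ker (kpart ψ ξ hξ γ₁))) * ↑(t ^ (ψ γ₂).toAdd)
        = ↑(t ^ (ψ γ₂).toAdd) *
          ι (e (MonoidAlgebra.of ℤ ψ.ker (cconjX ψ ξ (ψ γ₂) (kpart ψ ξ hξ γ₁)))) := by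
      rw [commtX σK ι t hcomm, sigma_zpow_conjX ψ ξ e σK hσK]
      simp
    have hk : kpart ψ ξ hξ (γ₁ * γ₂)
        = cconjX ψ ξ (ψ γ₂) (kpart ψ ξ hξ γ₁) * kpart ψ ξ hξ γ₂ := by
      apply Subtype.ext
      push_cast [cconjX_coe, kpart_coe, hψ12, map_mul]
      group
    rw [hk]
    have hofm : (MonoidAlgebra.of ℤ ψ.ker) (cconjX ψ ξ (ψ γ₂) (kpart ψ ξ hξ γ₁) * kpart ψ ξ hξ γ₂)
        = (MonoidAlgebra.of ℤ ψ.ker) (cconjX ψ ξ (ψ γ₂) (kpart ψ ξ hξ γ₁))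
          * (MonoidAlgebra.of ℤ ψ.ker) (kpart ψ ξ hξ γ₂) := map_mul _ _ _
    rw [hofm, map_mul e, map_mul ι, hψ12]
    have htt : (t ^ ((ψ γ₁) * (ψ γ₂)).toAdd) = t ^ (ψ γ₁).toAdd * t ^ (ψ γ₂).toAdd := by
      rw [toAdd_mul, zpow_add]
    rw [htt, Units.val_mul, mul_assoc, ← mul_assoc (↑(t ^ (ψ γ₂).toAdd) : L'), ← hcm]
    simp only [mul_assoc]

end

section
variable {Γ : Type*} [Group Γ] (ψ : Γ →* Multiplicative ℤ) (ξ : Multiplicative ℤ →* Γ)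
variable {K : Type*} [DivisionRing K] (e : MonoidAlgebra ℤ ψ.ker →+* K)
variable {L' : Type*} [Ring L'] (ι : K →+* L') (t : L'ˣ)

lemma Frepr (hξ : ∀ m, ψ (ξ m) = m) (a : MonoidAlgebra ℤ Γ) :
    (a.coeff.sum fun γ z => z • ((↑(t ^ (ψ γ).toAdd) : L')
        * ι (e (MonoidAlgebra.of ℤ ψ.ker (kpart ψ ξ hξ γ)))))
      = (a.coeff.sum fun γ z => Finsupp.single (ψ γ).toAdd
            (z • e (MonoidAlgebra.of ℤ ψ.ker (kpart ψ ξ hξ γ)))).sum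
          (fun n c => (↑(t ^ n) : L') * ι c) := by
  set Φ : (ℤ →₀ K) →+ L' :=
    Finsupp.liftAddHom (fun n => (AddMonoidHom.mulLeft (↑(t ^ n) : L')).comp ι.toAddMonoidHom)
    with hΦ
  have hΦs : ∀ (n : ℤ) (c : K), Φ (Finsupp.single n c) = (↑(t ^ n) : L') * ι c := by
    intro n c
    rw [hΦ, Finsupp.liftAddHom_apply_single]
    rfl
  have h1 : (a.coeff.sum fun γ z => Finsupp.single (ψ γ).toAdd
            (z • e (MonoidAlgebra.of ℤ ψ.ker (kpart ψ ξ hξ γ)))).sum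
          (fun n c => (↑(t ^ n) : L') * ι c)
      = Φ (a.coeff.sum fun γ z => Finsupp.single (ψ γ).toAdd
            (z • e (MonoidAlgebra.of ℤ ψ.ker (kpart ψ ξ hξ γ)))) := by
    rw [hΦ, Finsupp.liftAddHom_apply]
    rfl
  rw [h1, map_finsuppSum]
  apply Finsupp.sum_congr
  intro γ _
  rw [hΦs, map_zsmul ι, mul_smul_comm]

lemma Finj
    (hξ : ∀ m, ψ (ξ m) = m) (he : Function.Injective e)
    (hrep : ∀ x : L', ∃! f : ℤ →₀ K, x = f.sum fun n a => ((t ^ n : L'ˣ) : L') * ι a)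
    (a : MonoidAlgebra ℤ Γ)
    (ha : (a.coeff.sum fun γ z => z • ((↑(t ^ (ψ γ).toAdd) : L')
        * ι (e (MonoidAlgebra.of ℤ ψ.ker (kpart ψ ξ hξ γ))))) = 0) :
    a = 0 := by
  classical
  set f : ℤ →₀ K := a.coeff.sum fun γ z => Finsupp.single (ψ γ).toAdd
      (z • e (MonoidAlgebra.of ℤ ψ.ker (kpart ψ ξ hξ γ))) with hfdef
  have hf0 : f = 0 := by
    obtain ⟨f₀, hf₀, hu⟩ := hrep 0
    have h1 : f = f₀ := hu f (by
      show (0 : L') = _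
      rw [hfdef, ← Frepr ψ ξ e ι t hξ a]
      exact ha.symm)
    have h2 : (0 : ℤ →₀ K) = f₀ := hu 0 (by simp)
    rw [h1, ← h2]
  ext γ₀
  set n : ℤ := (ψ γ₀).toAdd with hn
  set b : MonoidAlgebra ℤ ψ.ker := a.coeff.sum fun γ z =>
      if (ψ γ).toAdd = n then MonoidAlgebra.single (kpart ψ ξ hξ γ) z else 0 with hbdef
  have heb : e b = f n := by
    rw [hbdef, hfdef, map_finsuppSum, Finsupp.sum_apply]
    apply Finsupp.sum_congr
    intro γ _
    rw [Finsupp.single_apply, apply_ite e, map_zero]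
    congr 1
    have h2 : (MonoidAlgebra.of ℤ ψ.ker (kpart ψ ξ hξ γ)) = MonoidAlgebra.single (kpart ψ ξ hξ γ) 1 := rfl
    rw [show (MonoidAlgebra.single (kpart ψ ξ hξ γ) (a.coeff γ) : MonoidAlgebra ℤ ψ.ker)
        = (a.coeff γ) • MonoidAlgebra.single (kpart ψ ξ hξ γ) (1:ℤ) by rw [MonoidAlgebra.smul_single]; simp,
      map_zsmul e, h2]
  have hb0 : b = 0 := he (by rw [heb, hf0]; simp)
  have hbeval : b.coeff (kpart ψ ξ hξ γ₀) = a.coeff γ₀ := by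
    rw [hbdef, MonoidAlgebra.coeff_finsuppSum, Finsupp.sum_apply, Finsupp.sum]
    rw [Finset.sum_eq_single γ₀]
    · by_cases h1 : (ψ γ₀).toAdd = n
      · rw [if_pos h1, MonoidAlgebra.coeff_single, Finsupp.single_eq_same]
      · exact absurd hn.symm h1
    · intro γ _ hne
      by_cases h1 : (ψ γ).toAdd = n
      · rw [if_pos h1, MonoidAlgebra.coeff_single, Finsupp.single_apply, if_neg]
        intro hk
        apply hne
        have hψ : ψ γ = ψ γ₀ := by
          have h3 := congrArg Multiplicative.ofAdd h1
          simpa [hn] using h3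
        have hkc := congrArg (Subtype.val) hk
        simp only [kpart_coe, hψ] at hkc
        exact mul_left_cancel hkc
      · rw [if_neg h1, MonoidAlgebra.coeff_zero, Finsupp.zero_apply]
    · intro hns
      rw [Finsupp.notMem_support_iff.mp hns]
      simp
  rw [hb0] at hbeval
  simpa using hbeval.symm
end

private lemma ringInverse_eq_of_mul_eq_one {M : Type*} [MonoidWithZero M] {x y : M}
    (hx : IsUnit x) (h : x * y = 1) : Ring.inverse x = y := by
  obtain ⟨u, rfl⟩ := hx
  rw [Ring.inverse_unit]
  calc (↑u⁻¹ : M) = ↑u⁻¹ * (↑u * y) := by rw [h, mul_one]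
    _ = y := by rw [← mul_assoc, Units.inv_mul, one_mul]

private lemma ringInverse_mul {M : Type*} [MonoidWithZero M] {x y : M}
    (hx : IsUnit x) (hy : IsUnit y) :
    Ring.inverse (x * y) = Ring.inverse y * Ring.inverse x :=
  ringInverse_eq_of_mul_eq_one (hx.mul hy) (by
    rw [mul_assoc, ← mul_assoc y, Ring.mul_inverse_cancel _ hy, one_mul,
      Ring.mul_inverse_cancel _ hx])

/-- Let `Γ` be PTFA and `ψ : Γ ↠ ℤ` an epimorphism with kernel `Γ^ψ` and splitting `ξ`.
Then the localization `ℤΓ (ℤΓ^ψ − {0})⁻¹` is isomorphic, as a ring, to the skew Laurent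
polynomial ring `K_{Γ^ψ}[t^{±1}]` over the right field of fractions `K_{Γ^ψ}` of `ℤΓ^ψ`,
where `a t = t (ξ(1)⁻¹ a ξ(1))`; the isomorphism is induced by `ξ`, sending `ℤΓ^ψ` to
`K_{Γ^ψ}` and `ξ(1)` to `t`.

Here the localization is axiomatized as any ring `L` with an injective map `j` from `ℤΓ`
inverting the nonzero elements of `ℤΓ^ψ` and with the right-fraction property, and the
skew Laurent polynomial ring as any ring `L'` containing `K_{Γ^ψ}` (via `ι`) and a unit
`t` with the twisted commutation rule and unique Laurent representations. -/
theorem localization_iso_skewLaurent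
    (Γ : Type*) [Group Γ] (hΓ : IsPTFA Γ)
    (ψ : Γ →* Multiplicative ℤ) (hψ : Function.Surjective ψ)
    (ξ : Multiplicative ℤ →* Γ) (hξ : ∀ m, ψ (ξ m) = m)
    -- `K` is the right field of fractions of `ℤ Γ^ψ`
    (K : Type*) [DivisionRing K] (e : MonoidAlgebra ℤ ψ.ker →+* K)
    (he : Function.Injective e)
    (hefrac : ∀ x : K, ∃ a s : MonoidAlgebra ℤ ψ.ker, s ≠ 0 ∧ x = e a * (e s)⁻¹)
    -- `σK` is the automorphism of `K` induced by conjugation by `ξ(1)` on `Γ^ψ`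
    (σK : K ≃+* K)
    (hσK : ∀ h h' : ψ.ker, (h' : Γ) = (ξ (Multiplicative.ofAdd 1))⁻¹ * h * ξ (Multiplicative.ofAdd 1) →
      σK (e (MonoidAlgebra.of ℤ ψ.ker h)) = e (MonoidAlgebra.of ℤ ψ.ker h'))
    -- `L` is the Ore localization `ℤΓ (ℤΓ^ψ − {0})⁻¹`
    (L : Type*) [Ring L] (j : MonoidAlgebra ℤ Γ →+* L) (hj : Function.Injective j)
    (hjunit : ∀ s : MonoidAlgebra ℤ ψ.ker, s ≠ 0 →
      IsUnit (j (MonoidAlgebra.mapDomainRingHom ℤ ψ.ker.subtype s)))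
    (hjdenom : ∀ x : L, ∃ (a : MonoidAlgebra ℤ Γ) (s : MonoidAlgebra ℤ ψ.ker) (_ : s ≠ 0)
      (u : Lˣ), (u : L) = j (MonoidAlgebra.mapDomainRingHom ℤ ψ.ker.subtype s) ∧
      x = j a * (↑u⁻¹ : L))
    -- `L'` is the skew Laurent polynomial ring `K[t^{±1}]` twisted by `σK`
    (L' : Type*) [Ring L'] (ι : K →+* L') (hι : Function.Injective ι) (t : L'ˣ)
    (hcomm : ∀ a : K, ι a * t = t * ι (σK a))
    (hrep : ∀ x : L', ∃! f : ℤ →₀ K, x = f.sum fun n a => ((t ^ n : L'ˣ) : L') * ι a) :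
    ∃ φ : L ≃+* L',
      (∀ s : MonoidAlgebra ℤ ψ.ker,
        φ (j (MonoidAlgebra.mapDomainRingHom ℤ ψ.ker.subtype s)) = ι (e s)) ∧
      φ (j (MonoidAlgebra.of ℤ Γ (ξ (Multiplicative.ofAdd 1)))) = t := by
  classical
  set Jb : MonoidAlgebra ℤ ψ.ker →+* MonoidAlgebra ℤ Γ :=
    MonoidAlgebra.mapDomainRingHom ℤ ψ.ker.subtype with hJbdef
  obtain ⟨G, hG⟩ := Ghom_exists ψ ξ e σK ι t hξ hσK hcomm
  set F : MonoidAlgebra ℤ Γ →+* L' := ((MonoidAlgebra.lift ℤ L' Γ) G).toRingHom with hFdef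
  have hFap : ∀ a : MonoidAlgebra ℤ Γ, F a = a.coeff.sum fun γ z => z • G γ := fun a =>
    MonoidAlgebra.lift_apply G a
  have hFof : ∀ γ : Γ, F (MonoidAlgebra.of ℤ Γ γ) = G γ := fun γ => MonoidAlgebra.lift_of G γ
  have hGof : ∀ h : ψ.ker, G (↑h : Γ) = ι (e (MonoidAlgebra.of ℤ ψ.ker h)) := by
    intro h
    rw [hG]
    have h1 : ψ (↑h : Γ) = 1 := h.2
    have h2 : kpart ψ ξ hξ (↑h : Γ) = h := Subtype.ext (by simp [kpart_coe, h1])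
    rw [h2, h1]
    simp
  have hFJ : ∀ s : MonoidAlgebra ℤ ψ.ker, F (Jb s) = ι (e s) := by
    have hcomp : F.comp Jb = ι.comp e := by
      apply MonoidAlgebra.ringHom_ext
      · intro b
        have h1 : (Jb (MonoidAlgebra.single (1 : ψ.ker) b)) =
            MonoidAlgebra.single (1 : Γ) b := by
          rw [hJbdef]
          show MonoidAlgebra.mapDomain _ _ = _
          rw [MonoidAlgebra.mapDomain_single]
          rfl
        have h2 : (MonoidAlgebra.single (1 : Γ) b) = b • (1 : MonoidAlgebra ℤ Γ) := by
          rw [MonoidAlgebra.one_def, MonoidAlgebra.smul_single]; simp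
        have h3 : (MonoidAlgebra.single (1 : ψ.ker) b) = b • (1 : MonoidAlgebra ℤ ψ.ker) := by
          rw [MonoidAlgebra.one_def, MonoidAlgebra.smul_single]; simp
        rw [RingHom.comp_apply, RingHom.comp_apply, h1, h2, h3, map_zsmul, map_zsmul, map_zsmul,
          map_one, map_one, map_one]
      · intro h
        have h1 : (Jb (MonoidAlgebra.single h (1:ℤ))) = MonoidAlgebra.single (↑h : Γ) (1:ℤ) := by
          rw [hJbdef]
          show MonoidAlgebra.mapDomain _ _ = _
          rw [MonoidAlgebra.mapDomain_single]
          rfl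
        rw [RingHom.comp_apply, RingHom.comp_apply, h1]
        have h2 : (MonoidAlgebra.single (↑h : Γ) (1:ℤ)) = MonoidAlgebra.of ℤ Γ (↑h : Γ) := rfl
        have h3 : (MonoidAlgebra.single h (1:ℤ)) = MonoidAlgebra.of ℤ ψ.ker h := rfl
        rw [h2, h3, hFof, hGof]
    intro s
    exact DFunLike.congr_fun hcomp s
  have hENE : ∀ s : MonoidAlgebra ℤ ψ.ker, s ≠ 0 → e s ≠ 0 := fun s hs h0 =>
    hs (he (h0.trans (map_zero e).symm))
  have hFU : ∀ s : MonoidAlgebra ℤ ψ.ker, s ≠ 0 → IsUnit (F (Jb s)) := by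
    intro s hs
    rw [hFJ]
    exact (isUnit_iff_ne_zero.mpr (hENE s hs)).map ι
  have hjU : ∀ s : MonoidAlgebra ℤ ψ.ker, s ≠ 0 → IsUnit (j (Jb s)) := fun s hs => hjunit s hs
  have hone_ne : (1 : MonoidAlgebra ℤ ψ.ker) ≠ 0 := fun h =>
    one_ne_zero (α := K) (by rw [← map_one e, h, map_zero])
  have hRI1 : Ring.inverse (j (Jb 1)) = 1 := by
    rw [map_one Jb, map_one j, Ring.inverse_one]
  have hRF1 : Ring.inverse (F (Jb 1)) = 1 := by
    rw [map_one Jb, map_one F, Ring.inverse_one]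
  have hmulne : ∀ s c : MonoidAlgebra ℤ ψ.ker, s ≠ 0 → c ≠ 0 → s * c ≠ 0 := by
    intro s c hs hc h0
    exact mul_ne_zero (hENE s hs) (hENE c hc) (by rw [← map_mul, h0, map_zero])
  -- Ore-type common denominator
  have hore : ∀ (s₁ : MonoidAlgebra ℤ ψ.ker), s₁ ≠ 0 → ∀ a : MonoidAlgebra ℤ Γ,
      ∃ (b : MonoidAlgebra ℤ Γ) (c : MonoidAlgebra ℤ ψ.ker), c ≠ 0 ∧
        Ring.inverse (j (Jb s₁)) * j a = j b * Ring.inverse (j (Jb c)) ∧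
        a * Jb c = Jb s₁ * b := by
    intro s₁ hs₁ a
    obtain ⟨b, c, hc, u, hu, hz⟩ := hjdenom (Ring.inverse (j (Jb s₁)) * j a)
    have hinvu : (↑u⁻¹ : L) = Ring.inverse (j (Jb c)) := by
      rw [← hu, Ring.inverse_unit]
    refine ⟨b, c, hc, by rw [hz, hinvu], ?_⟩
    apply hj
    rw [map_mul, map_mul]
    have h2 : j a = j (Jb s₁) * (j b * (↑u⁻¹ : L)) := by
      rw [← hz, Ring.mul_inverse_cancel_left _ _ (hjU s₁ hs₁)]
    rw [h2, ← hu, mul_assoc, mul_assoc, Units.inv_mul, mul_one]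
  -- the fundamental well-definedness lemma
  have werd : ∀ (a₁ a₂ : MonoidAlgebra ℤ Γ) (s₁ s₂ : MonoidAlgebra ℤ ψ.ker),
      s₁ ≠ 0 → s₂ ≠ 0 →
      j a₁ * Ring.inverse (j (Jb s₁)) = j a₂ * Ring.inverse (j (Jb s₂)) →
      F a₁ * Ring.inverse (F (Jb s₁)) = F a₂ * Ring.inverse (F (Jb s₂)) := by
    intro a₁ a₂ s₁ s₂ hs₁ hs₂ hEq
    obtain ⟨b, c, hc, hz, hrel⟩ := hore s₁ hs₁ (Jb s₂)
    have hnum : a₁ * b = a₂ * Jb c := by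
      apply hj
      rw [map_mul, map_mul]
      have h1 : j a₁ * (j b * Ring.inverse (j (Jb c))) = j a₂ := by
        rw [← hz, ← mul_assoc, hEq, mul_assoc,
          Ring.inverse_mul_cancel _ (hjU s₂ hs₂), mul_one]
      calc j a₁ * j b
          = j a₁ * (j b * Ring.inverse (j (Jb c))) * j (Jb c) := by
            rw [mul_assoc (j a₁), Ring.inverse_mul_cancel_right _ _ (hjU c hc)]
        _ = j a₂ * j (Jb c) := by rw [h1]
    have hFrel : F (Jb s₂) * F (Jb c) = F (Jb s₁) * F b := by
      have h4 := congrArg F hrel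
      rw [map_mul, map_mul] at h4
      exact h4
    have hFnum : F a₁ * F b = F a₂ * F (Jb c) := by
      have h4 := congrArg F hnum
      rw [map_mul, map_mul] at h4
      exact h4
    have hinv1 : Ring.inverse (F (Jb s₁))
        = F b * Ring.inverse (F (Jb c)) * Ring.inverse (F (Jb s₂)) := by
      apply ringInverse_eq_of_mul_eq_one (hFU s₁ hs₁)
      calc F (Jb s₁) * (F b * Ring.inverse (F (Jb c)) * Ring.inverse (F (Jb s₂)))
          = F (Jb s₁) * F b * Ring.inverse (F (Jb c)) * Ring.inverse (F (Jb s₂)) := by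
            simp only [mul_assoc]
        _ = F (Jb s₂) * F (Jb c) * Ring.inverse (F (Jb c)) * Ring.inverse (F (Jb s₂)) := by
            rw [hFrel]
        _ = F (Jb s₂) * Ring.inverse (F (Jb s₂)) := by
            rw [Ring.mul_inverse_cancel_right _ _ (hFU c hc)]
        _ = 1 := Ring.mul_inverse_cancel _ (hFU s₂ hs₂)
    rw [hinv1, ← mul_assoc, ← mul_assoc, hFnum,
      Ring.mul_inverse_cancel_right _ _ (hFU c hc)]
  -- choose representations
  choose num den hden uf huf hxf using hjdenom
  have hval : ∀ x : L, x = j (num x) * Ring.inverse (j (Jb (den x))) := by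
    intro x
    conv_lhs => rw [hxf x]
    congr 1
    rw [← huf x, Ring.inverse_unit]
  set φ₀ : L → L' := fun x => F (num x) * Ring.inverse (F (Jb (den x))) with hφ₀
  have hφval : ∀ (x : L) (a : MonoidAlgebra ℤ Γ) (s : MonoidAlgebra ℤ ψ.ker), s ≠ 0 →
      x = j a * Ring.inverse (j (Jb s)) → φ₀ x = F a * Ring.inverse (F (Jb s)) := by
    intro x a s hs hx
    exact werd (num x) a (den x) s (hden x) hs (by rw [← hval x, ← hx])
  have hone : φ₀ 1 = 1 := by
    have h1 : (1 : L) = j 1 * Ring.inverse (j (Jb 1)) := by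
      rw [hRI1, mul_one, map_one j]
    rw [hφval 1 1 1 hone_ne h1, hRF1, mul_one, map_one F]
  have hzero : φ₀ 0 = 0 := by
    have h0 : (0 : L) = j 0 * Ring.inverse (j (Jb 1)) := by rw [map_zero, zero_mul]
    rw [hφval 0 0 1 hone_ne h0, map_zero, zero_mul]
  have hadd : ∀ x y : L, φ₀ (x + y) = φ₀ x + φ₀ y := by
    intro x y
    obtain ⟨b, c, hc, hz, hrel⟩ := hore (den x) (hden x) (Jb (den y))
    have hsc : den y * c ≠ 0 := hmulne _ _ (hden y) hc
    have hIsc : Ring.inverse (j (Jb (den y * c)))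
        = Ring.inverse (j (Jb c)) * Ring.inverse (j (Jb (den y))) := by
      rw [map_mul, map_mul]
      exact ringInverse_mul (hjU _ (hden y)) (hjU _ hc)
    have hx2 : x = j (num x * b) * Ring.inverse (j (Jb (den y * c))) := by
      rw [map_mul, hIsc]
      calc x = j (num x) * Ring.inverse (j (Jb (den x))) := hval x
        _ = j (num x) * (Ring.inverse (j (Jb (den x))) * j (Jb (den y))
              * Ring.inverse (j (Jb (den y)))) := by
            rw [Ring.mul_inverse_cancel_right _ _ (hjU _ (hden y))]
        _ = j (num x) * (j b * Ring.inverse (j (Jb c)) * Ring.inverse (j (Jb (den y)))) := by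
            rw [hz]
        _ = j (num x) * j b * (Ring.inverse (j (Jb c)) * Ring.inverse (j (Jb (den y)))) := by
            simp only [mul_assoc]
    have hy2 : y = j (num y * Jb c) * Ring.inverse (j (Jb (den y * c))) := by
      rw [map_mul, hIsc]
      calc y = j (num y) * Ring.inverse (j (Jb (den y))) := hval y
        _ = j (num y) * (j (Jb c) * Ring.inverse (j (Jb c))) * Ring.inverse (j (Jb (den y))) := by
            rw [Ring.mul_inverse_cancel _ (hjU _ hc), mul_one]
        _ = j (num y) * j (Jb c) * (Ring.inverse (j (Jb c)) * Ring.inverse (j (Jb (den y)))) := by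
            simp only [mul_assoc]
    have hxy : x + y = j (num x * b + num y * Jb c) * Ring.inverse (j (Jb (den y * c))) := by
      rw [map_add, add_mul, ← hx2, ← hy2]
    rw [hφval (x + y) _ _ hsc hxy, hφval x (num x * b) (den y * c) hsc hx2,
      hφval y (num y * Jb c) (den y * c) hsc hy2, map_add, add_mul]
  have hmul : ∀ x y : L, φ₀ (x * y) = φ₀ x * φ₀ y := by
    intro x y
    obtain ⟨b, c, hc, hz, hrel⟩ := hore (den x) (hden x) (num y)
    have hsc : den y * c ≠ 0 := hmulne _ _ (hden y) hc
    have hIsc : Ring.inverse (j (Jb (den y * c)))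
        = Ring.inverse (j (Jb c)) * Ring.inverse (j (Jb (den y))) := by
      rw [map_mul, map_mul]
      exact ringInverse_mul (hjU _ (hden y)) (hjU _ hc)
    have hxy : x * y = j (num x * b) * Ring.inverse (j (Jb (den y * c))) := by
      rw [map_mul, hIsc]
      calc x * y = j (num x) * Ring.inverse (j (Jb (den x)))
            * (j (num y) * Ring.inverse (j (Jb (den y)))) := by rw [← hval x, ← hval y]
        _ = j (num x) * (Ring.inverse (j (Jb (den x))) * j (num y))
              * Ring.inverse (j (Jb (den y))) := by simp only [mul_assoc]
        _ = j (num x) * (j b * Ring.inverse (j (Jb c))) * Ring.inverse (j (Jb (den y))) := by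
            rw [hz]
        _ = j (num x) * j b * (Ring.inverse (j (Jb c)) * Ring.inverse (j (Jb (den y)))) := by
            simp only [mul_assoc]
    have hFz : Ring.inverse (F (Jb (den x))) * F (num y) = F b * Ring.inverse (F (Jb c)) := by
      have h1 : F (num y) * F (Jb c) = F (Jb (den x)) * F b := by
        have h4 := congrArg F hrel
        rw [map_mul, map_mul] at h4
        exact h4
      have h2 : Ring.inverse (F (Jb (den x))) * (F (num y) * F (Jb c))
            * Ring.inverse (F (Jb c))
          = Ring.inverse (F (Jb (den x))) * (F (Jb (den x)) * F b)
            * Ring.inverse (F (Jb c)) := by rw [h1]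
      rw [Ring.inverse_mul_cancel_left _ _ (hFU _ (hden x))] at h2
      rw [← mul_assoc, mul_assoc _ (F (Jb c)) _, Ring.mul_inverse_cancel _ (hFU c hc),
        mul_one] at h2
      exact h2
    rw [hφval (x * y) _ _ hsc hxy, hφval x (num x) (den x) (hden x) (hval x),
      hφval y (num y) (den y) (hden y) (hval y)]
    calc F (num x * b) * Ring.inverse (F (Jb (den y * c)))
        = F (num x) * F b * (Ring.inverse (F (Jb c)) * Ring.inverse (F (Jb (den y)))) := by
          rw [map_mul, map_mul, map_mul, ringInverse_mul (hFU _ (hden y)) (hFU _ hc),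
            mul_assoc]
      _ = F (num x) * (F b * Ring.inverse (F (Jb c))) * Ring.inverse (F (Jb (den y))) := by
          simp only [mul_assoc]
      _ = F (num x) * (Ring.inverse (F (Jb (den x))) * F (num y))
            * Ring.inverse (F (Jb (den y))) := by rw [hFz]
      _ = _ := by simp only [mul_assoc]
  set φhom : L →+* L' :=
    { toFun := φ₀, map_one' := hone, map_mul' := hmul, map_zero' := hzero, map_add' := hadd }
    with hφhom
  have hφapp : ∀ x : L, φhom x = φ₀ x := fun _ => rfl
  -- injectivity
  have hinj : Function.Injective φhom := by
    rw [injective_iff_map_eq_zero]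
    intro x hx0
    rw [hφapp, hφ₀] at hx0
    have h2 : F (num x) = 0 := by
      have h3 := congrArg (fun w => w * F (Jb (den x))) hx0
      simp only at h3
      rwa [mul_assoc, Ring.inverse_mul_cancel _ (hFU _ (hden x)), mul_one, zero_mul] at h3
    have h3 : num x = 0 := by
      apply Finj ψ ξ e ι t hξ he hrep (num x)
      rw [show (Finsupp.sum (num x).coeff fun γ z => z • ((↑(t ^ (ψ γ).toAdd) : L')
          * ι (e (MonoidAlgebra.of ℤ ψ.ker (kpart ψ ξ hξ γ)))))
          = F (num x) from ?_, h2]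
      rw [hFap]
      apply Finsupp.sum_congr
      intro γ _
      rw [hG]
    rw [hval x, h3, map_zero, zero_mul]
  -- key values
  have hφJ : ∀ s : MonoidAlgebra ℤ ψ.ker, φhom (j (Jb s)) = ι (e s) := by
    intro s
    have h1 : j (Jb s) = j (Jb s) * Ring.inverse (j (Jb 1)) := by
      rw [hRI1, mul_one]
    rw [hφapp, hφval _ (Jb s) 1 hone_ne h1, hRF1, mul_one, hFJ]
  have hφt : φhom (j (MonoidAlgebra.of ℤ Γ (ξ (Multiplicative.ofAdd 1)))) = ↑t := by
    have h1 : j (MonoidAlgebra.of ℤ Γ (ξ (Multiplicative.ofAdd 1)))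
        = j (MonoidAlgebra.of ℤ Γ (ξ (Multiplicative.ofAdd 1))) * Ring.inverse (j (Jb 1)) := by
      rw [hRI1, mul_one]
    rw [hφapp, hφval _ _ 1 hone_ne h1, hRF1, mul_one, hFof, hG]
    have hk1 : kpart ψ ξ hξ (ξ (Multiplicative.ofAdd 1)) = 1 :=
      Subtype.ext (by simp [kpart_coe, hξ])
    rw [hk1, hξ]
    simp [← MonoidAlgebra.one_def]
  have hφtm : φhom (j (MonoidAlgebra.of ℤ Γ (ξ (Multiplicative.ofAdd (-1))))) = ↑t⁻¹ := by
    have h1 : j (MonoidAlgebra.of ℤ Γ (ξ (Multiplicative.ofAdd (-1))))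
        = j (MonoidAlgebra.of ℤ Γ (ξ (Multiplicative.ofAdd (-1)))) * Ring.inverse (j (Jb 1)) := by
      rw [hRI1, mul_one]
    rw [hφapp, hφval _ _ 1 hone_ne h1, hRF1, mul_one, hFof, hG]
    have hk1 : kpart ψ ξ hξ (ξ (Multiplicative.ofAdd (-1))) = 1 :=
      Subtype.ext (by simp [kpart_coe, hξ])
    rw [hk1, hξ]
    simp [← MonoidAlgebra.one_def]
  -- surjectivity
  have hsurj : Function.Surjective φhom := by
    intro x'
    have hrange : ∀ z : L', z ∈ φhom.range → ∃ y, φhom y = z := by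
      intro z hz
      obtain ⟨y, hy⟩ := hz
      exact ⟨y, hy⟩
    apply hrange
    obtain ⟨f, hf, -⟩ := hrep x'
    have hmemι : ∀ aK : K, ι aK ∈ φhom.range := by
      intro aK
      obtain ⟨p, q, hq, hpq⟩ := hefrac aK
      have hIU : IsUnit (ι (e q)) := (isUnit_iff_ne_zero.mpr (hENE q hq)).map ι
      have h2 : ι aK = ι (e p) * Ring.inverse (ι (e q)) := by
        rw [hpq, map_mul]
        congr 1
        symm
        apply ringInverse_eq_of_mul_eq_one hIU
        rw [← map_mul, mul_inv_cancel₀ (hENE q hq), map_one]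
      refine ⟨j (Jb p) * Ring.inverse (j (Jb q)), ?_⟩
      rw [hφapp, hφval _ (Jb p) q hq rfl, hFJ, hFJ, ← h2]
    have hT1 : (↑t : L') ∈ φhom.range := ⟨_, hφt⟩
    have hTm : (↑t⁻¹ : L') ∈ φhom.range := ⟨_, hφtm⟩
    have hTn : ∀ n : ℤ, (↑(t ^ n) : L') ∈ φhom.range := by
      intro n
      induction n using Int.induction_on with
      | zero => simpa using φhom.range.one_mem
      | succ n ih => rw [zpow_add_one, Units.val_mul]; exact φhom.range.mul_mem ih hT1
      | pred n ih => rw [zpow_sub_one, Units.val_mul]; exact φhom.range.mul_mem ih hTm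
    rw [hf, Finsupp.sum]
    exact φhom.range.sum_mem fun n _ => φhom.range.mul_mem (hTn n) (hmemι (f n))
  refine ⟨RingEquiv.ofBijective φhom ⟨hinj, hsurj⟩, ?_, ?_⟩
  · intro s
    exact hφJ s
  · exact hφt
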